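/- Let n be a positive integer, let A ⊆ [n], let C := [n] \ A, let L be a positive integer, let T_1,…,T_L be subsets of C, and let s_1,…,s_L ∈ {0,1}^A. For x ∈ {0,1}^n write x_A and x_C for the restrictions of x to A and C, and let S_T(x_C) := {ℓ ∈ [L] : x_i = 1 for all i ∈ T_ℓ}. Define f : {0,1}^n → {0,1} by: f(x) = 1 if |S_T(x_C)| ≥ 2; f(x) = 1 if S_T(x_C) = {ℓ} and x_A = s_ℓ; and f(x) = 0 otherwise. Then f is union-closed. -/
import Mathlib


/-- The yes-functions in the union-closedness lower bound construction are
union-closed.  Here `A ⊆ [n]`, `C = [n] \ A`, `T_ℓ ⊆ C` for each `ℓ ∈ [L]`, and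
`s_ℓ ∈ {0,1}^A` (encoded as a function on all of `Fin n`; only its values on `A` are
used).  `S_T(x_C) = {ℓ : x_i = 1 for all i ∈ T_ℓ}`, and `f(x) = 1` iff
`|S_T(x_C)| ≥ 2`, or `S_T(x_C) = {ℓ}` and `x_A = s_ℓ`.  Then `f` is union-closed. -/
theorem yes_function_is_union_closed (n : ℕ) (A : Finset (Fin n)) (L : ℕ) (hL : 0 < L)
    (T : Fin L → Finset (Fin n)) (hT : ∀ ℓ, T ℓ ⊆ Aᶜ)
    (s : Fin L → Fin n → Bool)
    (f : (Fin n → Bool) → Bool)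
    (h2 : ∀ x : Fin n → Bool,
      2 ≤ (Finset.univ.filter (fun ℓ : Fin L => ∀ i ∈ T ℓ, x i = true)).card → f x = true)
    (h1 : ∀ (x : Fin n → Bool) (ℓ : Fin L),
      Finset.univ.filter (fun ℓ' : Fin L => ∀ i ∈ T ℓ', x i = true) = {ℓ} →
      (f x = true ↔ ∀ i ∈ A, x i = s ℓ i))
    (h0 : ∀ x : Fin n → Bool,
      Finset.univ.filter (fun ℓ : Fin L => ∀ i ∈ T ℓ, x i = true) = ∅ → f x = false) :
    ∀ x y : Fin n → Bool, f x = true → f y = true → f (fun i => x i || y i) = true := by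
  intro x y hx hy
  set z : Fin n → Bool := fun i => x i || y i with hz
  set Sx := Finset.univ.filter (fun ℓ : Fin L => ∀ i ∈ T ℓ, x i = true) with hSx
  set Sy := Finset.univ.filter (fun ℓ : Fin L => ∀ i ∈ T ℓ, y i = true) with hSy
  set Sz := Finset.univ.filter (fun ℓ : Fin L => ∀ i ∈ T ℓ, z i = true) with hSz
  have hxz : Sx ⊆ Sz := by
    intro ℓ hℓ
    simp only [hSx, hSz, Finset.mem_filter, Finset.mem_univ, true_and] at hℓ ⊢
    intro i hi; simp [hz, hℓ i hi]
  have hyz : Sy ⊆ Sz := by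
    intro ℓ hℓ
    simp only [hSy, hSz, Finset.mem_filter, Finset.mem_univ, true_and] at hℓ ⊢
    intro i hi; simp [hz, hℓ i hi]
  have hxne : Sx.Nonempty := by
    rcases Finset.eq_empty_or_nonempty Sx with h | h
    · have := h0 x h; rw [hx] at this; simp at this
    · exact h
  have hyne : Sy.Nonempty := by
    rcases Finset.eq_empty_or_nonempty Sy with h | h
    · have := h0 y h; rw [hy] at this; simp at this
    · exact h
  have hzne : Sz.Nonempty := hxne.mono hxz
  rcases lt_or_ge Sz.card 2 with hc | hc
  · have hc1 : Sz.card = 1 := by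
      have := Finset.card_pos.mpr hzne; omega
    obtain ⟨ℓ, hℓ⟩ := Finset.card_eq_one.mp hc1
    have hSxeq : Sx = {ℓ} :=
      Finset.eq_of_subset_of_card_le (hℓ ▸ hxz)
        (by rw [Finset.card_singleton]; exact Finset.card_pos.mpr hxne)
    have hSyeq : Sy = {ℓ} :=
      Finset.eq_of_subset_of_card_le (hℓ ▸ hyz)
        (by rw [Finset.card_singleton]; exact Finset.card_pos.mpr hyne)
    have hxA := (h1 x ℓ hSxeq).mp hx
    have hyA := (h1 y ℓ hSyeq).mp hy
    refine (h1 z ℓ hℓ).mpr ?_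
    intro i hi
    simp [hz, hxA i hi, hyA i hi]
  · exact h2 z hc
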